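/- The set {x ∈ (0,1) : λ(x) = ∞} is residual (comeagre) in (0,1). -/

import Mathlib

open Filter MeasureTheory Set
open scoped ENNReal NNReal

/-- The Engel series map `T(x) = x⌈1/x⌉ - 1`, with `T(0) = 0`. -/
noncomputable def engelT (x : ℝ) : ℝ := if x = 0 then 0 else x * (⌈x⁻¹⌉ : ℝ) - 1

/-- The `n`-th Engel digit `d_n(x) = ⌈1/(T^{n-1} x)⌉` (for `n ≥ 1`);
it equals `0` when the Engel expansion of `x` has terminated. -/
noncomputable def engelDigit (n : ℕ) (x : ℝ) : ℕ := ⌈(engelT^[n - 1] x)⁻¹⌉₊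

/-- The exponent of convergence `λ(x) = inf {s ≥ 0 : Σ_{n≥1} d_n(x)^{-s} < ∞}`,
 valued in `[0,∞]` (with `inf ∅ = ∞`). -/
noncomputable def engelLambda (x : ℝ) : ℝ≥0∞ :=
  sInf (ENNReal.ofReal ''
    {s : ℝ | 0 ≤ s ∧ Summable fun n : ℕ => ((engelDigit (n + 1) x : ℝ)) ^ (-s)})

/-- `D(x) = liminf_n (log d_n(x))/(log n)`, valued in `[0,∞]`. -/
noncomputable def engelDexp (x : ℝ) : ℝ≥0∞ :=
  Filter.liminf (fun n : ℕ =>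
    ENNReal.ofReal (Real.log (engelDigit n x) / Real.log n)) Filter.atTop

namespace EngelResidualAux

lemma engelT_lt_self {x : ℝ} (hx : 0 < x) : engelT x < x := by
  rw [engelT, if_neg hx.ne']
  have h := Int.ceil_lt_add_one (x⁻¹)
  have hinv : x * x⁻¹ = 1 := mul_inv_cancel₀ hx.ne'
  nlinarith

lemma natCeil_branch {d : ℕ} (hd : 2 ≤ d) {x : ℝ}
    (hx1 : 1/(d:ℝ) < x) (hx2 : x < 1/((d:ℝ)-1)) : ⌈x⁻¹⌉₊ = d := by
  have hd2 : (2:ℝ) ≤ (d:ℝ) := by exact_mod_cast hd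
  have hd1 : (0:ℝ) < (d:ℝ) - 1 := by linarith
  have hd0 : (0:ℝ) < (d:ℝ) := by linarith
  have hx0 : 0 < x := lt_trans (by positivity) hx1
  have hinv : x * x⁻¹ = 1 := mul_inv_cancel₀ hx0.ne'
  have e1 : x * ((d:ℝ) - 1) < 1 := (lt_div_iff₀ hd1).mp hx2
  have e2 : 1 < x * (d:ℝ) := (div_lt_iff₀ hd0).mp hx1
  have h1 : (d:ℝ) - 1 < x⁻¹ := by nlinarith
  have h2 : x⁻¹ < (d:ℝ) := by nlinarith
  rw [Nat.ceil_eq_iff (by omega)]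
  refine ⟨?_, h2.le⟩
  have : ((d - 1 : ℕ) : ℝ) = (d:ℝ) - 1 := by
    push_cast [Nat.cast_sub (by omega : 1 ≤ d)]; ring
  rw [this]; exact h1

lemma engelT_branch {d : ℕ} (hd : 2 ≤ d) {x : ℝ}
    (hx1 : 1/(d:ℝ) < x) (hx2 : x < 1/((d:ℝ)-1)) : engelT x = (d:ℝ) * x - 1 := by
  have hd2 : (2:ℝ) ≤ (d:ℝ) := by exact_mod_cast hd
  have hd1 : (0:ℝ) < (d:ℝ) - 1 := by linarith
  have hd0 : (0:ℝ) < (d:ℝ) := by linarith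
  have hx0 : 0 < x := lt_trans (by positivity) hx1
  have hinv : x * x⁻¹ = 1 := mul_inv_cancel₀ hx0.ne'
  have e1 : x * ((d:ℝ) - 1) < 1 := (lt_div_iff₀ hd1).mp hx2
  have e2 : 1 < x * (d:ℝ) := (div_lt_iff₀ hd0).mp hx1
  have h1 : (d:ℝ) - 1 < x⁻¹ := by nlinarith
  have h2 : x⁻¹ ≤ (d:ℝ) := by nlinarith
  have hceil : ⌈x⁻¹⌉ = (d:ℤ) := by
    rw [Int.ceil_eq_iff]
    constructor
    · push_cast; linarith
    · push_cast; exact h2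
  rw [engelT, if_neg hx0.ne', hceil]
  push_cast; ring

lemma branch_subset {d : ℕ} (hd : 2 ≤ d) :
    Ioo (1/(d:ℝ)) (1/((d:ℝ)-1)) ⊆ Ioo (0:ℝ) 1 := by
  have hd2 : (2:ℝ) ≤ (d:ℝ) := by exact_mod_cast hd
  have hd1 : (0:ℝ) < (d:ℝ) - 1 := by linarith
  have hd0 : (0:ℝ) < (d:ℝ) := by linarith
  intro x hx
  constructor
  · have : (0:ℝ) < 1/(d:ℝ) := by positivity
    linarith [hx.1]
  · have : 1/((d:ℝ)-1) ≤ 1 := by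
      rw [div_le_one hd1]; linarith
    linarith [hx.2]

/-- Monotonicity of iterates: they strictly decrease while positive. -/
lemma iter_anti {x : ℝ} {N : ℕ}
    (h : ∀ i < N, engelT^[i] x ∈ Ioo (0:ℝ) 1) :
    ∀ i j, i ≤ j → j < N → engelT^[j] x ≤ engelT^[i] x := by
  intro i j hij hjN
  induction j with
  | zero =>
    have : i = 0 := Nat.le_zero.mp hij
    rw [this]
  | succ j IH =>
    rcases Nat.eq_or_lt_of_le hij with rfl | hlt
    · exact le_refl _
    · have hj : j < N := Nat.lt_of_succ_lt hjN
      have h1 : engelT^[j+1] x < engelT^[j] x := by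
        rw [Function.iterate_succ_apply']
        exact engelT_lt_self (h j hj).1
      exact le_trans h1.le (IH (Nat.lt_succ_iff.mp hlt) hj)

lemma engelDigit_succ (n : ℕ) (x : ℝ) :
    engelDigit (n+1) x = ⌈(engelT^[n] x)⁻¹⌉₊ := by
  simp [engelDigit]

lemma digits_bounded {x : ℝ} {N : ℕ}
    (h : ∀ i < N, engelT^[i] x ∈ Ioo (0:ℝ) 1) (n : ℕ) (h1 : 1 ≤ n) (hn : n ≤ N) :
    2 ≤ engelDigit n x ∧ engelDigit n x ≤ engelDigit N x := by
  obtain ⟨n', rfl⟩ : ∃ n', n = n' + 1 := ⟨n - 1, by omega⟩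
  obtain ⟨N', rfl⟩ : ∃ N', N = N' + 1 := ⟨N - 1, by omega⟩
  rw [engelDigit_succ, engelDigit_succ]
  have hmemn := h n' (by omega)
  have hmemN := h N' (by omega)
  constructor
  · have h1 : (1:ℝ) < (engelT^[n'] x)⁻¹ :=
      one_lt_inv_iff₀.mpr ⟨hmemn.1, hmemn.2⟩
    have := Nat.lt_ceil.mpr (by exact_mod_cast h1 : ((1:ℕ):ℝ) < (engelT^[n'] x)⁻¹)
    omega
  · apply Nat.ceil_le_ceil
    apply inv_anti₀ hmemN.1
    exact iter_anti h n' N' (by omega) (by omega)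

/-- Constant-digit cylinders. -/
lemma const_cylinder {D : ℕ} (hD : 2 ≤ D) (M : ℕ) :
    ∃ u v : ℝ, 0 < u ∧ u < v ∧ v ≤ 1/((D:ℝ)-1) ∧
      ∀ y ∈ Ioo u v, ∀ i < M, engelT^[i] y ∈ Ioo (1/(D:ℝ)) (1/((D:ℝ)-1)) := by
  have hD2 : (2:ℝ) ≤ (D:ℝ) := by exact_mod_cast hD
  have hD1 : (0:ℝ) < (D:ℝ) - 1 := by linarith
  have hD0 : (0:ℝ) < (D:ℝ) := by linarith
  induction M with
  | zero =>
    refine ⟨1/(D:ℝ), 1/((D:ℝ)-1), by positivity, ?_, le_refl _, ?_⟩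
    · apply div_lt_div_of_pos_left one_pos hD1; linarith
    · intro y _ i hi; omega
  | succ M IH =>
    obtain ⟨u, v, hu, huv, hv, hmem⟩ := IH
    have hv1 : v * ((D:ℝ)-1) ≤ 1 := (le_div_iff₀ hD1).mp hv
    refine ⟨(u+1)/(D:ℝ), (v+1)/(D:ℝ), by positivity, by gcongr <;> linarith, ?_, ?_⟩
    · rw [div_le_div_iff₀ hD0 hD1]; nlinarith
    · intro y hy i hi
      have hyB : y ∈ Ioo (1/(D:ℝ)) (1/((D:ℝ)-1)) := by
        constructor
        · calc 1/(D:ℝ) < (u+1)/(D:ℝ) := by gcongr; linarith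
            _ < y := hy.1
        · calc y < (v+1)/(D:ℝ) := hy.2
            _ ≤ 1/((D:ℝ)-1) := by rw [div_le_div_iff₀ hD0 hD1]; nlinarith
      cases i with
      | zero => exact hyB
      | succ i =>
        rw [Function.iterate_succ_apply]
        have hTy : engelT y = (D:ℝ) * y - 1 := engelT_branch hD hyB.1 hyB.2
        have hTmem : engelT y ∈ Ioo u v := by
          rw [hTy]
          constructor
          · have := (div_lt_iff₀ hD0).mp hy.1; nlinarith
          · have := (lt_div_iff₀ hD0).mp hy.2; nlinarith
        exact hmem _ hTmem i (by omega)

set_option maxHeartbeats 2000000 in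
/-- Expansion phase: inside any interval one can find an affinely parametrized
subinterval mapped by some iterate of `engelT` onto an interval `(0, ε)`. -/
lemma expand : ∀ n : ℕ, ∀ a b : ℝ, 0 ≤ a → a < b → b ≤ 1 → 1 ≤ 2^n * (b - a) →
    ∃ (j : ℕ) (c A ε : ℝ), 0 < A ∧ 0 < ε ∧ ε ≤ 1 ∧
      ∀ y ∈ Ioo (0:ℝ) ε,
        c + y / A ∈ Ioo a b ∧ (∀ i < j, engelT^[i] (c + y / A) ∈ Ioo (0:ℝ) 1) ∧
        engelT^[j] (c + y / A) = y := by
  intro n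
  induction n with
  | zero =>
    intro a b ha hab hb hgrow
    -- in this case, case B is impossible
    set e : ℕ := ⌊1/b⌋₊ + 1 with he_def
    have hb0 : (0:ℝ) < b := lt_of_le_of_lt ha hab
    have h1b : (1:ℝ) ≤ 1/b := by rw [le_div_iff₀ hb0]; linarith
    have he2 : 2 ≤ e := by
      have : 1 ≤ ⌊1/b⌋₊ := Nat.le_floor (by exact_mod_cast h1b)
      omega
    have he2R : (2:ℝ) ≤ (e:ℝ) := by exact_mod_cast he2
    have he1R : (0:ℝ) < (e:ℝ) - 1 := by linarith
    have he0R : (0:ℝ) < (e:ℝ) := by linarith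
    have hfloor : (1:ℝ)/b < (e:ℝ) := by
      have := Nat.lt_floor_add_one (1/b)
      rw [he_def]; push_cast; linarith
    have heb : 1/(e:ℝ) < b := by
      rw [div_lt_iff₀ he0R]
      have := (div_lt_iff₀ hb0).mp hfloor
      nlinarith
    have hbe1 : b ≤ 1/((e:ℝ)-1) := by
      have hfl : ((e:ℝ) - 1) ≤ 1/b := by
        rw [he_def]; push_cast
        have := Nat.floor_le (le_trans zero_le_one h1b)
        linarith
      rw [le_div_iff₀ he1R]
      have := (le_div_iff₀ hb0).mp hfl
      nlinarith
    clear_value e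
    have hcase : a < 1/(e:ℝ) := by
      by_contra hcon
      push_neg at hcon
      have h1e : (0:ℝ) < 1/(e:ℝ) := by positivity
      simp only [pow_zero, one_mul] at hgrow
      linarith
    -- Case A
    refine ⟨1, 1/(e:ℝ), (e:ℝ), (e:ℝ)*b - 1, he0R, by nlinarith [(div_lt_iff₀ he0R).mp heb], ?_, ?_⟩
    · nlinarith [(le_div_iff₀ he1R).mp hbe1]
    · intro y hy
      obtain ⟨hy0, hyε⟩ := hy
      set x := 1/(e:ℝ) + y/(e:ℝ) with hx_def
      clear_value x
      have hx1 : 1/(e:ℝ) < x := by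
        have : 0 < y/(e:ℝ) := by positivity
        linarith
      have hxb : x < b := by
        rw [hx_def, ← add_div, div_lt_iff₀ he0R]
        linarith
      have hx2 : x < 1/((e:ℝ)-1) := lt_of_lt_of_le hxb hbe1
      refine ⟨⟨lt_trans hcase hx1, hxb⟩, ?_, ?_⟩
      · intro i hi
        have : i = 0 := by omega
        rw [this]
        simp only [Function.iterate_zero_apply]
        constructor
        · have : (0:ℝ) < 1/(e:ℝ) := by positivity
          linarith
        · linarith
      · rw [Function.iterate_one, engelT_branch he2 hx1 hx2, hx_def]
        field_simp
        ring
  | succ n IH =>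
    intro a b ha hab hb hgrow
    set e : ℕ := ⌊1/b⌋₊ + 1 with he_def
    have hb0 : (0:ℝ) < b := lt_of_le_of_lt ha hab
    have h1b : (1:ℝ) ≤ 1/b := by rw [le_div_iff₀ hb0]; linarith
    have he2 : 2 ≤ e := by
      have : 1 ≤ ⌊1/b⌋₊ := Nat.le_floor (by exact_mod_cast h1b)
      omega
    have he2R : (2:ℝ) ≤ (e:ℝ) := by exact_mod_cast he2
    have he1R : (0:ℝ) < (e:ℝ) - 1 := by linarith
    have he0R : (0:ℝ) < (e:ℝ) := by linarith
    have hfloor : (1:ℝ)/b < (e:ℝ) := by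
      have := Nat.lt_floor_add_one (1/b)
      rw [he_def]; push_cast; linarith
    have heb : 1/(e:ℝ) < b := by
      rw [div_lt_iff₀ he0R]
      have := (div_lt_iff₀ hb0).mp hfloor
      nlinarith
    have hbe1 : b ≤ 1/((e:ℝ)-1) := by
      have hfl : ((e:ℝ) - 1) ≤ 1/b := by
        rw [he_def]; push_cast
        have := Nat.floor_le (le_trans zero_le_one h1b)
        linarith
      rw [le_div_iff₀ he1R]
      have := (le_div_iff₀ hb0).mp hfl
      nlinarith
    clear_value e
    by_cases hcase : a < 1/(e:ℝ)
    · -- Case A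
      refine ⟨1, 1/(e:ℝ), (e:ℝ), (e:ℝ)*b - 1, he0R, by nlinarith [(div_lt_iff₀ he0R).mp heb], ?_, ?_⟩
      · nlinarith [(le_div_iff₀ he1R).mp hbe1]
      · intro y hy
        obtain ⟨hy0, hyε⟩ := hy
        set x := 1/(e:ℝ) + y/(e:ℝ) with hx_def
        clear_value x
        have hx1 : 1/(e:ℝ) < x := by
          have : 0 < y/(e:ℝ) := by positivity
          linarith
        have hxb : x < b := by
          rw [hx_def, ← add_div, div_lt_iff₀ he0R]
          linarith
        have hx2 : x < 1/((e:ℝ)-1) := lt_of_lt_of_le hxb hbe1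
        refine ⟨⟨lt_trans hcase hx1, hxb⟩, ?_, ?_⟩
        · intro i hi
          have : i = 0 := by omega
          rw [this]
          simp only [Function.iterate_zero_apply]
          constructor
          · have : (0:ℝ) < 1/(e:ℝ) := by positivity
            linarith
          · linarith
        · rw [Function.iterate_one, engelT_branch he2 hx1 hx2, hx_def]
          field_simp
          ring
    · -- Case B
      push_neg at hcase  -- 1/e ≤ a
      have ha' : (0:ℝ) ≤ (e:ℝ)*a - 1 := by
        have := (div_le_iff₀ he0R).mp hcase
        linarith
      have hab' : (e:ℝ)*a - 1 < (e:ℝ)*b - 1 := by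
        have := mul_lt_mul_of_pos_left hab he0R
        linarith
      have hb'1 : (e:ℝ)*b - 1 ≤ 1 := by
        have := (le_div_iff₀ he1R).mp hbe1
        linarith
      have hgrow' : 1 ≤ 2^n * (((e:ℝ)*b - 1) - ((e:ℝ)*a - 1)) := by
        have h2n : (0:ℝ) < (2:ℝ)^n := by positivity
        have hba : (0:ℝ) < b - a := by linarith
        have hkey : (0:ℝ) ≤ ((e:ℝ)-2) * ((2:ℝ)^n * (b-a)) :=
          mul_nonneg (by linarith) (by positivity)
        have hps : (2:ℝ)^(n+1) = 2 * 2^n := by ring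
        rw [hps] at hgrow
        nlinarith [hkey, hgrow]
      obtain ⟨j, c, A, ε, hA, hε0, hε1, hmain⟩ := IH ((e:ℝ)*a - 1) ((e:ℝ)*b - 1) ha' hab' hb'1 hgrow'
      refine ⟨j+1, (c+1)/(e:ℝ), (e:ℝ)*A, ε, by positivity, hε0, hε1, ?_⟩
      intro y hy
      obtain ⟨hx'ab, hx'iter, hx'j⟩ := hmain y hy
      set x' := c + y / A with hx'_def
      clear_value x'
      clear IH
      have hxeq : (c+1)/(e:ℝ) + y/((e:ℝ)*A) = (x' + 1)/(e:ℝ) := by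
        rw [hx'_def]
        field_simp
        ring
      rw [hxeq]
      set x := (x' + 1)/(e:ℝ) with hx_def
      clear_value x
      have hxa : a < x := by
        rw [hx_def, lt_div_iff₀ he0R]
        have := hx'ab.1
        nlinarith
      have hxb : x < b := by
        rw [hx_def, div_lt_iff₀ he0R]
        have := hx'ab.2
        nlinarith
      have hx1 : 1/(e:ℝ) < x := lt_of_le_of_lt hcase hxa
      have hx2 : x < 1/((e:ℝ)-1) := lt_of_lt_of_le hxb hbe1
      have hTx : engelT x = x' := by
        rw [engelT_branch he2 hx1 hx2, hx_def]
        field_simp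
        ring
      refine ⟨⟨hxa, hxb⟩, ?_, ?_⟩
      · intro i hi
        cases i with
        | zero =>
          simp only [Function.iterate_zero_apply]
          constructor
          · have : (0:ℝ) < 1/(e:ℝ) := by positivity
            linarith
          · linarith
        | succ i =>
          rw [Function.iterate_succ_apply, hTx]
          exact hx'iter i (by omega)
      · rw [Function.iterate_succ_apply, hTx]
        exact hx'j

/-- Density core: every subinterval of `(0,1)` contains an open cylinder
on which the `N`-th digit is a prescribed `D` with `m * D ^ k ≤ N`. -/
lemma cylinder (k m : ℕ) {a b : ℝ} (ha : 0 ≤ a) (hab : a < b) (hb : b ≤ 1) :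
    ∃ lo hi : ℝ, lo < hi ∧ Ioo lo hi ⊆ Ioo a b ∧ ∃ N D : ℕ, 2 ≤ D ∧ m * D ^ k ≤ N ∧ 1 ≤ N ∧
      ∀ x ∈ Ioo lo hi, (∀ i < N, engelT^[i] x ∈ Ioo (0:ℝ) 1) ∧ engelDigit N x = D := by
  have hba : (0:ℝ) < b - a := by linarith
  obtain ⟨n, hn⟩ := pow_unbounded_of_one_lt (R := ℝ) (1/(b-a)) one_lt_two
  have hgrow : 1 ≤ 2^n * (b - a) := by
    have := (div_lt_iff₀ hba).mp hn
    nlinarith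
  obtain ⟨j, c, A, ε, hA, hε0, hε1, hmain⟩ := expand n a b ha hab hb hgrow
  set D : ℕ := ⌊1/ε⌋₊ + 2 with hD_def
  have hD2 : 2 ≤ D := by omega
  have hD2R : (2:ℝ) ≤ (D:ℝ) := by exact_mod_cast hD2
  have hD1R : (0:ℝ) < (D:ℝ) - 1 := by linarith
  have hD0R : (0:ℝ) < (D:ℝ) := by linarith
  have hDε : 1/((D:ℝ)-1) < ε := by
    have h1 : (1:ℝ)/ε < (⌊1/ε⌋₊ : ℝ) + 1 := Nat.lt_floor_add_one _
    have h2 : ((D:ℝ) - 1) = (⌊1/ε⌋₊ : ℝ) + 1 := by rw [hD_def]; push_cast; ring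
    rw [div_lt_iff₀ hD1R, h2]
    have := (div_lt_iff₀ hε0).mp h1
    nlinarith
  clear_value D
  set M : ℕ := m * D ^ k + 1 with hM_def
  clear_value M
  obtain ⟨u, v, hu, huv, hv, hcyl⟩ := const_cylinder hD2 M
  refine ⟨c + u/A, c + v/A, by have := (div_lt_div_iff_of_pos_right hA).mpr huv; linarith,
    ?_, j + M, D, hD2, by omega, by omega, ?_⟩
  all_goals {
    intro x hx
    obtain ⟨hx1, hx2⟩ := hx
    set y := (x - c) * A with hy_def
    have hyu : u < y := by
      have h1 : u/A < x - c := by linarith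
      have := mul_lt_mul_of_pos_right h1 hA
      rw [div_mul_cancel₀ u hA.ne'] at this
      linarith [this]
    have hyv : y < v := by
      have h1 : x - c < v/A := by linarith
      have := mul_lt_mul_of_pos_right h1 hA
      rw [div_mul_cancel₀ v hA.ne'] at this
      linarith [this]
    have hy0 : 0 < y := lt_trans hu hyu
    have hyε : y < ε := lt_trans hyv (lt_of_le_of_lt hv hDε)
    have hxy : c + y / A = x := by
      rw [hy_def]
      field_simp
      ring
    have hm := hmain y ⟨hy0, hyε⟩
    rw [hxy] at hm
    obtain ⟨hmab, hmiter, hmj⟩ := hm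
    first
    | exact hmab
    | · constructor
        · intro i hi
          rcases Nat.lt_or_ge i j with hij | hij
          · exact hmiter i hij
          · obtain ⟨i', rfl⟩ : ∃ i', i = i' + j := ⟨i - j, by omega⟩
            rw [Function.iterate_add_apply, hmj]
            exact branch_subset hD2 (hcyl y ⟨hyu, hyv⟩ i' (by omega))
        · rw [engelDigit, show j + M - 1 = (M-1) + j by omega,
            Function.iterate_add_apply, hmj]
          have hmem := hcyl y ⟨hyu, hyv⟩ (M-1) (by omega)
          exact natCeil_branch hD2 hmem.1 hmem.2
  }

end EngelResidualAux

open EngelResidualAux in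
set_option maxHeartbeats 1000000 in
/-- The set `{x ∈ (0,1) : λ(x) = ∞}` is residual (comeagre) in `(0,1)`. -/
theorem engelLambda_eq_top_residual :
    {x : Set.Ioo (0 : ℝ) 1 | engelLambda (x : ℝ) = ⊤} ∈ residual (Set.Ioo (0 : ℝ) 1) := by
  classical
  set Sset : ℕ → ℕ → Set (Set.Ioo (0:ℝ) 1) := fun k m =>
    {x | ∃ N D : ℕ, 2 ≤ D ∧ m * D ^ k ≤ N ∧ 1 ≤ N ∧
      ∀ n, 1 ≤ n → n ≤ N → 2 ≤ engelDigit n (x:ℝ) ∧ engelDigit n (x:ℝ) ≤ D} with hS_def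
  have hdense : ∀ k m : ℕ, Dense (interior (Sset k m)) := by
    intro k m
    rw [dense_iff_inter_open]
    intro U hU hUne
    obtain ⟨x0, hx0U⟩ := hUne
    have hUnhds : U ∈ nhds x0 := hU.mem_nhds hx0U
    rw [mem_nhds_subtype] at hUnhds
    obtain ⟨t, ht, htU⟩ := hUnhds
    have ht' : t ∩ Ioo 0 1 ∈ nhds (x0:ℝ) := inter_mem ht (isOpen_Ioo.mem_nhds x0.2)
    rw [mem_nhds_iff_exists_Ioo_subset] at ht'
    obtain ⟨a, b, hx0ab, hab_sub⟩ := ht'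
    have hx0ab' : (x0:ℝ) ∈ Ioo (max a 0) (min b 1) :=
      ⟨max_lt hx0ab.1 x0.2.1, lt_min hx0ab.2 x0.2.2⟩
    obtain ⟨lo, hi, hlohi, hsub, N, D, hD2, hND, hN1, hprop⟩ :=
      cylinder k m (le_max_right a 0) (lt_trans hx0ab'.1 hx0ab'.2) (min_le_right b 1)
    have hmid : (lo+hi)/2 ∈ Ioo lo hi := ⟨by linarith, by linarith⟩
    have hmid_ab' : (lo+hi)/2 ∈ Ioo (max a 0) (min b 1) := hsub hmid
    have hmid01 : (lo+hi)/2 ∈ Ioo (0:ℝ) 1 :=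
      ⟨lt_of_le_of_lt (le_max_right a 0) hmid_ab'.1,
       lt_of_lt_of_le hmid_ab'.2 (min_le_right b 1)⟩
    refine ⟨⟨(lo+hi)/2, hmid01⟩, ?_, ?_⟩
    · apply htU
      have : (lo+hi)/2 ∈ Ioo a b :=
        ⟨lt_of_le_of_lt (le_max_left a 0) hmid_ab'.1,
         lt_of_lt_of_le hmid_ab'.2 (min_le_left b 1)⟩
      exact (hab_sub this).1
    · have hopen : IsOpen (Subtype.val ⁻¹' Ioo lo hi : Set (Set.Ioo (0:ℝ) 1)) :=
        isOpen_Ioo.preimage continuous_subtype_val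
      have hsubS : (Subtype.val ⁻¹' Ioo lo hi : Set (Set.Ioo (0:ℝ) 1)) ⊆ Sset k m := by
        intro w hw
        obtain ⟨hiter, hdigN⟩ := hprop (w:ℝ) hw
        refine ⟨N, D, hD2, hND, hN1, fun n h1 hn => ?_⟩
        obtain ⟨g1, g2⟩ := digits_bounded hiter n h1 hn
        exact ⟨g1, by rw [hdigN] at g2; exact g2⟩
      exact interior_maximal hsubS hopen hmid
  have hres : (⋂ k : ℕ, ⋂ m : ℕ, interior (Sset k m)) ∈ residual (Set.Ioo (0:ℝ) 1) := by
    rw [countable_iInter_mem]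
    intro k
    rw [countable_iInter_mem]
    intro m
    exact residual_of_dense_open isOpen_interior (hdense k m)
  refine Filter.mem_of_superset hres ?_
  intro x hx
  simp only [mem_iInter] at hx
  have hxS : ∀ k m : ℕ, x ∈ Sset k m := fun k m => interior_subset (hx k m)
  show engelLambda (x:ℝ) = ⊤
  have hempty : {s : ℝ | 0 ≤ s ∧
      Summable fun n : ℕ => ((engelDigit (n + 1) (x:ℝ) : ℝ)) ^ (-s)} = ∅ := by
    rw [eq_empty_iff_forall_notMem]
    rintro s ⟨hs0, hsum⟩
    set f : ℕ → ℝ := fun n => ((engelDigit (n + 1) (x:ℝ) : ℝ)) ^ (-s) with hf_def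
    have hf0 : ∀ n, 0 ≤ f n := fun n => Real.rpow_nonneg (Nat.cast_nonneg _) _
    set k : ℕ := ⌈s⌉₊ + 1 with hk_def
    have hsk : s ≤ (k:ℝ) := by
      have := Nat.le_ceil s
      rw [hk_def]; push_cast; linarith
    set m : ℕ := ⌈∑' n, f n⌉₊ + 1 with hm_def
    obtain ⟨N, D, hD2, hND, hN1, hdig⟩ := hxS k m
    have hD2R : (2:ℝ) ≤ (D:ℝ) := by exact_mod_cast hD2
    have hD0R : (0:ℝ) < (D:ℝ) := by linarith
    have hD1R : (1:ℝ) ≤ (D:ℝ) := by linarith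
    -- each of the first N terms is at least D^(-s)
    have hterm : ∀ n ∈ Finset.range N, ((D:ℝ)) ^ (-s) ≤ f n := by
      intro n hn
      rw [Finset.mem_range] at hn
      obtain ⟨h2, hD'⟩ := hdig (n+1) (by omega) (by omega)
      have hd0 : (0:ℝ) < ((engelDigit (n+1) (x:ℝ) : ℕ) : ℝ) := by
        exact_mod_cast lt_of_lt_of_le (by norm_num) h2
      have hdD : ((engelDigit (n+1) (x:ℝ) : ℕ) : ℝ) ≤ (D:ℝ) := by exact_mod_cast hD'
      rw [hf_def]
      simp only
      rw [Real.rpow_neg (le_of_lt hD0R), Real.rpow_neg (le_of_lt hd0)]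
      apply inv_anti₀ (Real.rpow_pos_of_pos hd0 s)
      exact Real.rpow_le_rpow (le_of_lt hd0) hdD hs0
    have hsum_lower : (N:ℝ) * (D:ℝ) ^ (-s) ≤ ∑ n ∈ Finset.range N, f n := by
      have := Finset.card_nsmul_le_sum (Finset.range N) f ((D:ℝ) ^ (-s)) hterm
      rwa [Finset.card_range, nsmul_eq_mul] at this
    have hNreal : (m:ℝ) * (D:ℝ) ^ ((k:ℕ):ℝ) ≤ (N:ℝ) := by
      have : ((m * D ^ k : ℕ) : ℝ) ≤ (N:ℝ) := by exact_mod_cast hND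
      rw [Real.rpow_natCast]
      push_cast at this ⊢
      linarith
    have hcancel : (D:ℝ) ^ s * (D:ℝ) ^ (-s) = 1 := by
      rw [← Real.rpow_add hD0R]
      simp
    have hDk : (D:ℝ) ^ s ≤ (D:ℝ) ^ ((k:ℕ):ℝ) :=
      Real.rpow_le_rpow_of_exponent_le hD1R hsk
    have hrpow_nonneg : (0:ℝ) ≤ (D:ℝ) ^ (-s) := Real.rpow_nonneg (le_of_lt hD0R) _
    have hmain : (m:ℝ) ≤ ∑ n ∈ Finset.range N, f n := by
      calc (m:ℝ) = (m:ℝ) * ((D:ℝ) ^ s * (D:ℝ) ^ (-s)) := by rw [hcancel, mul_one]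
        _ = ((m:ℝ) * (D:ℝ) ^ s) * (D:ℝ) ^ (-s) := by ring
        _ ≤ ((m:ℝ) * (D:ℝ) ^ ((k:ℕ):ℝ)) * (D:ℝ) ^ (-s) := by
            apply mul_le_mul_of_nonneg_right _ hrpow_nonneg
            exact mul_le_mul_of_nonneg_left hDk (Nat.cast_nonneg m)
        _ ≤ (N:ℝ) * (D:ℝ) ^ (-s) := mul_le_mul_of_nonneg_right hNreal hrpow_nonneg
        _ ≤ ∑ n ∈ Finset.range N, f n := hsum_lower
    have hupper : ∑ n ∈ Finset.range N, f n ≤ ∑' n, f n :=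
      Summable.sum_le_tsum (Finset.range N) (fun i _ => hf0 i) hsum
    have hmlt : (∑' n, f n) < (m:ℝ) := by
      have := Nat.le_ceil (∑' n, f n)
      rw [hm_def]; push_cast; linarith
    linarith
  rw [engelLambda, hempty, image_empty, sInf_empty]
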